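/- For any ordinal space [0,κ] with κ infinite, the map r_A(x) = max{y ∈ A : y ≤ x}, for A a countable closed subset of [0,κ] containing 0 all of whose isolated points are isolated in [0,κ], is a well-defined continuous retraction of [0,κ] onto A; moreover, if A ⊆ B are two such sets then r_A ∘ r_B = r_B ∘ r_A = r_A. -/

import Mathlib

open Set Topology Order

private lemma exists_isGreatest_aux (c : Ordinal.{0}) (A : Set (Set.Iic c))
    (hAcl : IsClosed A) (hz : (0:Ordinal) ≤ c) (hA0 : (⟨0, hz⟩ : Set.Iic c) ∈ A)
    (x : Set.Iic c) : ∃ g, IsGreatest {y | y ∈ A ∧ y ≤ x} g := by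
  have hset : {y | y ∈ A ∧ y ≤ x} = A ∩ Set.Iic x := rfl
  set S : Set Ordinal := Subtype.val '' (A ∩ Set.Iic x) with hS
  have hSne : S.Nonempty := ⟨0, ⟨⟨0, hz⟩, ⟨hA0, Set.mem_Iic.mpr (Subtype.coe_le_coe.mp zero_le)⟩, rfl⟩⟩
  have hSbdd : BddAbove S := ⟨x.1, by rintro _ ⟨y, hy, rfl⟩; exact hy.2⟩
  have hcl : IsClosed S :=
    ((Topology.IsClosedEmbedding.subtypeVal (isClosed_Iic (a := c))).isClosedMap _
      (hAcl.inter isClosed_Iic))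
  have hmem := hcl.csSup_mem hSne hSbdd
  obtain ⟨g, hg, hgval⟩ := hmem
  refine ⟨g, ⟨hg.1, hg.2⟩, fun y hy => ?_⟩
  have : y.1 ≤ sSup S := le_csSup hSbdd ⟨y, hy, rfl⟩
  exact Subtype.coe_le_coe.mp (hgval ▸ this)

private lemma retraction_continuous (c : Ordinal.{0}) (A : Set (Set.Iic c))
    (hAiso : ∀ x ∈ A, (∃ U : Set (Set.Iic c), IsOpen U ∧ U ∩ A = {x}) →
      IsOpen ({x} : Set (Set.Iic c)))
    (r : Set.Iic c → Set.Iic c)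
    (hr : ∀ x, IsGreatest {y | y ∈ A ∧ y ≤ x} (r x)) : Continuous r := by
  rw [continuous_iff_continuousAt]
  intro x
  by_cases hop : IsOpen ({x} : Set (Set.Iic c))
  · have h : 𝓝 x = pure x := (isOpen_singleton_iff_nhds_eq_pure x).mp hop
    rw [ContinuousAt, h]
    exact tendsto_pure_nhds r x
  · rw [ContinuousAt]
    refine tendsto_order.2 ⟨?_, ?_⟩
    · intro b hb
      rcases lt_or_eq_of_le (hr x).1.2 with hlt | heq
      · filter_upwards [isOpen_Ioi.mem_nhds hlt] with y hy
        exact lt_of_lt_of_le hb ((hr y).2 ⟨(hr x).1.1, le_of_lt hy⟩)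
      · have hxA : x ∈ A := heq ▸ (hr x).1.1
        have hbx : b < x := heq ▸ hb
        have hex : ∃ a, a ∈ A ∧ b < a ∧ a < x := by
          by_contra hno
          push_neg at hno
          have hUopen : IsOpen (Set.Ioc b x) := by
            rcases eq_or_lt_of_le (Set.mem_Iic.mp x.2) with htop | hlt
            · have huniv : Set.Iic x = (Set.univ : Set (Set.Iic c)) := by
                ext z
                simp only [Set.mem_Iic, Set.mem_univ, iff_true]
                exact Subtype.coe_le_coe.mp (le_trans (Set.mem_Iic.mp z.2) htop.ge)
              rw [show Set.Ioc b x = Set.Ioi b ∩ Set.Iic x from rfl, huniv,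
                Set.inter_univ]
              exact isOpen_Ioi
            · set s : Set.Iic c := ⟨Order.succ x.1, Order.succ_le_of_lt hlt⟩ with hs
              have hIic : Set.Iic x = Set.Iio s := by
                ext z
                simp only [Set.mem_Iic, Set.mem_Iio]
                rw [← Subtype.coe_le_coe, ← Subtype.coe_lt_coe]
                exact (Order.lt_succ_iff (a := z.1)).symm
              rw [show Set.Ioc b x = Set.Ioi b ∩ Set.Iic x from rfl, hIic]
              exact isOpen_Ioi.inter isOpen_Iio
          have hUA : Set.Ioc b x ∩ A = {x} := by
            ext z
            constructor
            · rintro ⟨⟨hz1, hz2⟩, hzA⟩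
              exact le_antisymm hz2 (hno z hzA hz1)
            · rintro rfl
              exact ⟨⟨hbx, le_rfl⟩, hxA⟩
          exact hop (hAiso x hxA ⟨_, hUopen, hUA⟩)
        obtain ⟨a, haA, hba, hax⟩ := hex
        filter_upwards [isOpen_Ioi.mem_nhds hax] with y hy
        exact lt_of_lt_of_le hba ((hr y).2 ⟨haA, le_of_lt hy⟩)
    · intro b hb
      by_cases hT : {a : Set.Iic c | a ∈ A ∧ b ≤ a}.Nonempty
      · obtain ⟨a0, ha0⟩ := hT
        set T := Subtype.val '' {a : Set.Iic c | a ∈ A ∧ b ≤ a} with hTdef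
        have hTne : T.Nonempty := ⟨a0.1, a0, ha0, rfl⟩
        obtain ⟨m, hm, hmval⟩ := csInf_mem hTne
        have hmin : ∀ z : Set.Iic c, z ∈ A → b ≤ z → m ≤ z := fun z hz hbz =>
          Subtype.coe_le_coe.mp (hmval ▸ csInf_le (OrderBot.bddBelow T) ⟨z, ⟨hz, hbz⟩, rfl⟩)
        have hxm : x < m := by
          by_contra h
          push_neg at h
          exact absurd ((hr x).2 ⟨hm.1, h⟩) (not_le.mpr (lt_of_lt_of_le hb hm.2))
        filter_upwards [isOpen_Iio.mem_nhds hxm] with y hy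
        by_contra h
        push_neg at h
        exact absurd (le_trans (hmin _ (hr y).1.1 h) (hr y).1.2) (not_le.mpr hy)
      · filter_upwards with y
        by_contra h
        push_neg at h
        exact hT ⟨r y, (hr y).1.1, h⟩

/-- Example 4.10, the skeleton on `[0,κ]`: For a countable closed
subset `A` of the ordinal space `[0,κ]` containing `0` whose isolated points are isolated
in `[0,κ]`, the map `x ↦ max {y ∈ A : y ≤ x}` is a well-defined continuous retraction of
`[0,κ]` onto `A`; for `A ⊆ B` as above, the corresponding retractions satisfy
`r_A ∘ r_B = r_B ∘ r_A = r_A`. -/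
theorem ordinal_space_retractions (κ : Cardinal.{0}) (hκ : Cardinal.aleph0 ≤ κ)
    (A B : Set (Set.Iic κ.ord))
    (hAc : A.Countable) (hAcl : IsClosed A)
    (hA0 : (⟨0, Set.mem_Iic.mpr zero_le⟩ : Set.Iic κ.ord) ∈ A)
    (hAiso : ∀ x ∈ A, (∃ U : Set (Set.Iic κ.ord), IsOpen U ∧ U ∩ A = {x}) →
      IsOpen ({x} : Set (Set.Iic κ.ord)))
    (hBc : B.Countable) (hBcl : IsClosed B)
    (hB0 : (⟨0, Set.mem_Iic.mpr zero_le⟩ : Set.Iic κ.ord) ∈ B)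
    (hBiso : ∀ x ∈ B, (∃ U : Set (Set.Iic κ.ord), IsOpen U ∧ U ∩ B = {x}) →
      IsOpen ({x} : Set (Set.Iic κ.ord)))
    (hAB : A ⊆ B) :
    ∃ rA rB : Set.Iic κ.ord → Set.Iic κ.ord,
      (∀ x, IsGreatest {y | y ∈ A ∧ y ≤ x} (rA x)) ∧
      (∀ x, IsGreatest {y | y ∈ B ∧ y ≤ x} (rB x)) ∧
      Continuous rA ∧ (∀ x, rA (rA x) = rA x) ∧ Set.range rA = A ∧
      Continuous rB ∧ (∀ x, rB (rB x) = rB x) ∧ Set.range rB = B ∧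
      (∀ x, rA (rB x) = rA x) ∧ (∀ x, rB (rA x) = rA x) := by
  have hz : (0 : Ordinal) ≤ κ.ord := zero_le
  choose rA hrA using exists_isGreatest_aux κ.ord A hAcl hz hA0
  choose rB hrB using exists_isGreatest_aux κ.ord B hBcl hz hB0
  have hfix : ∀ (S : Set (Set.Iic κ.ord)) (r : Set.Iic κ.ord → Set.Iic κ.ord),
      (∀ x, IsGreatest {y | y ∈ S ∧ y ≤ x} (r x)) → ∀ a, a ∈ S → r a = a :=
    fun S r hrS a ha => (hrS a).unique ⟨⟨ha, le_rfl⟩, fun y hy => hy.2⟩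
  refine ⟨rA, rB, hrA, hrB, retraction_continuous _ _ hAiso rA hrA, ?_, ?_,
    retraction_continuous _ _ hBiso rB hrB, ?_, ?_, ?_, ?_⟩
  · intro x; exact hfix A rA hrA _ (hrA x).1.1
  · ext a
    exact ⟨fun ⟨x, hx⟩ => hx ▸ (hrA x).1.1, fun ha => ⟨a, hfix A rA hrA a ha⟩⟩
  · intro x; exact hfix B rB hrB _ (hrB x).1.1
  · ext a
    exact ⟨fun ⟨x, hx⟩ => hx ▸ (hrB x).1.1, fun ha => ⟨a, hfix B rB hrB a ha⟩⟩
  · intro x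
    have hsets : {y | y ∈ A ∧ y ≤ rB x} = {y | y ∈ A ∧ y ≤ x} := by
      ext y
      constructor
      · rintro ⟨h1, h2⟩; exact ⟨h1, h2.trans (hrB x).1.2⟩
      · rintro ⟨h1, h2⟩; exact ⟨h1, (hrB x).2 ⟨hAB h1, h2⟩⟩
    have h2 : IsGreatest {y | y ∈ A ∧ y ≤ rB x} (rA x) := by
      rw [hsets]; exact hrA x
    exact (hrA (rB x)).unique h2
  · intro x; exact hfix B rB hrB _ (hAB (hrA x).1.1)
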